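/- arXiv:1603.01877 — 6 statements merged into one kernel-verified Lean document; each statement's English description precedes it below -/
import Mathlib

section
/- Let g be a finite-dimensional real Lie algebra, r ≥ 1, and η an alternating r-linear form on g which is closed with respect to the Chevalley–Eilenberg differential, i.e. for all x₀, …, x_r ∈ g one has Σ_{0 ≤ i < j ≤ r} (-1)^{i+j} η([xᵢ, xⱼ], x₀, …, x̂ᵢ, …, x̂ⱼ, …, x_r) = 0 (hats denoting omitted arguments). Then the null-space N = {x ∈ g : η(x, z₁, …, z_{r-1}) = 0 for all z₁, …, z_{r-1} ∈ g} is a Lie subalgebra of g. -/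
/-- If `η (x, z₁,…)` vanishes for all `z`, then `η` vanishes on any tuple containing `x`. -/
lemma aux_null {g : Type*} [AddCommGroup g] [Module ℝ g] {n : ℕ}
    (η : g [⋀^Fin (n + 1)]→ₗ[ℝ] ℝ) (x : g)
    (hx : ∀ z : Fin n → g, η (Fin.cons x z) = 0)
    (v : Fin (n + 1) → g) (k : Fin (n + 1)) (hv : v k = x) : η v = 0 := by
  have hperm := η.map_perm v (Equiv.swap 0 k)
  have h0 : (v ∘ Equiv.swap 0 k) 0 = x := by simp [hv]
  have hc : (v ∘ Equiv.swap 0 k) = Fin.cons x (Fin.tail (v ∘ Equiv.swap 0 k)) := by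
    rw [← h0, Fin.cons_self_tail]
  rw [hc, hx] at hperm
  rcases Int.units_eq_one_or (Equiv.Perm.sign (Equiv.swap 0 k)) with h | h <;>
    rw [h] at hperm <;> simpa using hperm.symm

/-- Let `g` be a finite-dimensional real Lie algebra and `η` an
alternating `r`-linear form on `g` (here written with `r = n + 1`, so that `r ≥ 1`)
which is closed with respect to the Chevalley–Eilenberg differential.  Then the
null-space `N = {x | η(x, z₁, …, z_{r-1}) = 0 for all zᵢ}` is a Lie subalgebra of `g`. -/
theorem nullspace_of_closed_form_is_subalgebra
    (g : Type*) [LieRing g] [LieAlgebra ℝ g] [FiniteDimensional ℝ g]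
    (n : ℕ) (η : g [⋀^Fin (n + 1)]→ₗ[ℝ] ℝ)
    (hclosed : ∀ x : Fin (n + 2) → g,
      ∑ i : Fin (n + 2), ∑ j : Fin (n + 2),
        (if h : i < j then
          (-1 : ℝ) ^ ((i : ℕ) + (j : ℕ)) *
            η (Fin.cons ⁅x i, x j⁆
              (x ∘ j.succAbove ∘
                (Fin.castLT i ((Fin.lt_def.mp h).trans_le
                  (Nat.lt_succ_iff.mp j.isLt))).succAbove))
        else 0) = 0) :
    ∃ N : LieSubalgebra ℝ g,
      (N : Set g) = {x : g | ∀ z : Fin n → g, η (Fin.cons x z) = 0} := by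
  have hupd : ∀ (t : g) (z : Fin n → g),
      Fin.cons t z = Function.update (Fin.cons (0 : g) z : Fin (n+1) → g) (0 : Fin (n+1)) t := by
    intro t z; rw [Fin.update_cons_zero]
  refine ⟨{ carrier := {x : g | ∀ z : Fin n → g, η (Fin.cons x z) = 0}
            add_mem' := ?_
            zero_mem' := ?_
            smul_mem' := ?_
            lie_mem' := ?_ }, rfl⟩
  · intro a b ha hb z
    rw [hupd, η.map_update_add, ← hupd, ← hupd, ha z, hb z, add_zero]
  · intro z
    rw [hupd, η.map_update_zero]
  · intro c a ha z
    rw [hupd, η.map_update_smul, ← hupd, ha z, smul_zero]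
  · intro x y hx hy z
    have hc := hclosed (Fin.cons x (Fin.cons y z))
    set X : Fin (n + 2) → g := Fin.cons x (Fin.cons y z) with hX
    -- every term except (i,j) = (0,1) vanishes
    have key : ∀ i j : Fin (n + 2), ¬(i = 0 ∧ j = 1) →
        (if h : i < j then
          (-1 : ℝ) ^ ((i : ℕ) + (j : ℕ)) *
            η (Fin.cons ⁅X i, X j⁆
              (X ∘ j.succAbove ∘
                (Fin.castLT i ((Fin.lt_def.mp h).trans_le
                  (Nat.lt_succ_iff.mp j.isLt))).succAbove))
        else 0) = 0 := by
      intro i j hij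
      by_cases h : i < j
      · rw [dif_pos h]
        set i' : Fin (n + 1) := Fin.castLT i ((Fin.lt_def.mp h).trans_le
          (Nat.lt_succ_iff.mp j.isLt)) with hi'
        -- in all surviving cases j has value ≥ 2, hence n ≥ 1
        have hj2 : 2 ≤ (j : ℕ) := by
          rcases eq_or_ne i 0 with rfl | hi0
          · have hj1 : (j : ℕ) ≠ 1 := fun hh => hij ⟨rfl, Fin.ext (by simp [hh])⟩
            have h0 : 0 < (j : ℕ) := Fin.lt_def.mp h
            omega
          · have h1 : 0 < (i : ℕ) := by
              rcases Nat.eq_zero_or_pos (i : ℕ) with h1 | h1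
              · exact absurd (Fin.ext (by simp [h1])) hi0
              · exact h1
            have h2 : (i : ℕ) < (j : ℕ) := Fin.lt_def.mp h
            omega
        have hn : 0 < n := by have := j.isLt; omega
        set k0 : Fin n := ⟨0, hn⟩ with hk0
        rcases eq_or_ne i 0 with rfl | hi0
        · -- index 1 (value y) survives
          have hi'0 : i' = 0 := rfl
          have hw : (X ∘ j.succAbove ∘ i'.succAbove) k0 = y := by
            rw [hi'0]
            simp only [Function.comp_apply, Fin.succAbove_zero]
            rw [Fin.succAbove_of_castSucc_lt j k0.succ
              (by rw [Fin.lt_def]; exact (show (1 : ℕ) < (j : ℕ) by omega))]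
            have : (k0.succ.castSucc : Fin (n + 2)) = 1 := by
              rw [Fin.ext_iff]; simp [hk0]
            rw [this]
            simp [hX]
          rw [aux_null η y hy _ k0.succ (by rw [Fin.cons_succ]; exact hw), mul_zero]
        · -- index 0 (value x) survives
          have hj0 : j ≠ 0 := Fin.pos_iff_ne_zero.mp (lt_of_le_of_lt (Fin.zero_le i) h)
          have hi'0 : 0 < (i' : ℕ) := by
            rcases Nat.eq_zero_or_pos (i' : ℕ) with h1 | h1
            · exact absurd (Fin.ext (by simpa [hi'] using h1)) hi0
            · exact h1
          have hw : (X ∘ j.succAbove ∘ i'.succAbove) k0 = x := by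
            simp only [Function.comp_apply]
            rw [Fin.succAbove_of_castSucc_lt i' k0
              (by rw [Fin.lt_def]; exact (show (0 : ℕ) < (i' : ℕ) from hi'0))]
            rw [Fin.succAbove_of_castSucc_lt j k0.castSucc
              (by rw [Fin.lt_def]; exact (show (0 : ℕ) < (j : ℕ) by omega))]
            have : (k0.castSucc.castSucc : Fin (n + 2)) = 0 := by
              rw [Fin.ext_iff]; simp [hk0]
            rw [this]
            simp [hX]
          rw [aux_null η x hx _ k0.succ (by rw [Fin.cons_succ]; exact hw), mul_zero]
      · rw [dif_neg h]
    rw [Fintype.sum_eq_single (0 : Fin (n + 2))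
        (fun i hi => Finset.sum_eq_zero fun j _ => key i j (fun hh => hi hh.1)),
      Fintype.sum_eq_single (1 : Fin (n + 2))
        (fun j hj => key 0 j (fun hh => hj hh.2))] at hc
    have h01 : (0 : Fin (n + 2)) < 1 := by simp [Fin.lt_def]
    rw [dif_pos h01] at hc
    have hw : (X ∘ (1 : Fin (n+2)).succAbove ∘
        (Fin.castLT (0 : Fin (n+2)) ((Fin.lt_def.mp h01).trans_le
          (Nat.lt_succ_iff.mp (1 : Fin (n+2)).isLt))).succAbove) = z := by
      funext k
      have : Fin.castLT (0 : Fin (n+2)) ((Fin.lt_def.mp h01).trans_le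
          (Nat.lt_succ_iff.mp (1 : Fin (n+2)).isLt)) = (0 : Fin (n+1)) := rfl
      rw [this]
      simp only [Function.comp_apply, Fin.succAbove_zero]
      rw [Fin.succAbove_of_le_castSucc 1 k.succ (by simp [Fin.le_def])]
      simp [hX]
    rw [hw] at hc
    have hXX : ⁅X 0, X 1⁆ = ⁅x, y⁆ := by simp [hX]
    rw [hXX] at hc
    simpa using hc
end

section
/- Let g be a finite-dimensional nilpotent real Lie algebra with an integrable complex structure I, and let η be a closed semipositive Hermitian form on (g, I). Assume the null-space N(η) is a holomorphic Lie subalgebra of g. Then N(η) contains g¹ + I(g¹), where g¹ = [g, g]. -/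
/-- Let `g` be a finite-dimensional nilpotent real Lie algebra with an
integrable complex structure `I`, and `η` a closed semipositive Hermitian form on `(g, I)`.
Assume the null-space `N(η)` is a holomorphic Lie subalgebra of `g`.  Then `N(η)` contains
`g¹ + I(g¹)`, where `g¹ = [g, g]`. -/
theorem nullspace_contains_commutator
    (g : Type*) [LieRing g] [LieAlgebra ℝ g] [FiniteDimensional ℝ g]
    [LieRing.IsNilpotent g]
    (I : g →ₗ[ℝ] g) (hI : ∀ x, I (I x) = -x)
    (hint : ∀ x y : g, ⁅I x, I y⁆ = ⁅x, y⁆ + I ⁅I x, y⁆ + I ⁅x, I y⁆)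
    (η : g →ₗ[ℝ] g →ₗ[ℝ] ℝ) (halt : ∀ x, η x x = 0)
    (hinv : ∀ x y, η (I x) (I y) = η x y)
    (hpos : ∀ x, 0 ≤ η x (I x))
    (hclosed : ∀ x y z : g, η ⁅x, y⁆ z + η ⁅y, z⁆ x + η ⁅z, x⁆ y = 0)
    (N : Set g) (hN : N = {x : g | η x (I x) = 0})
    -- `N(η)` is a Lie subalgebra:
    (hNadd : ∀ x ∈ N, ∀ y ∈ N, x + y ∈ N)
    (hNsmul : ∀ (c : ℝ), ∀ x ∈ N, c • x ∈ N)
    (hNbra : ∀ x ∈ N, ∀ y ∈ N, ⁅x, y⁆ ∈ N)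
    -- `N(η)` is `I`-invariant and holomorphic:
    (hNI : ∀ x ∈ N, I x ∈ N)
    (hNhol : ∀ x ∈ N, ∀ y : g,
      ⁅y, x⁆ + ⁅I y, I x⁆ + I ⁅I y, x⁆ - I ⁅y, I x⁆ ∈ N) :
    ∀ x : g,
      x ∈ ((LieAlgebra.derivedSeries ℝ g 1).toSubmodule ⊔
           ((LieAlgebra.derivedSeries ℝ g 1).toSubmodule.map I) : Submodule ℝ g) →
      x ∈ N := by
  classical
  -- basic linearity facts
  have esub : ∀ a b c : g, η (a - b) c = η a c - η b c := by
    intro a b c; rw [map_sub, LinearMap.sub_apply]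
  have eneg1 : ∀ a c : g, η (-a) c = - η a c := by
    intro a c; rw [map_neg, LinearMap.neg_apply]
  have eaddl : ∀ a b c : g, η (a + b) c = η a c + η b c := by
    intro a b c; rw [map_add, LinearMap.add_apply]
  -- antisymmetry of η
  have hanti : ∀ a b : g, η b a = - η a b := by
    intro a b
    have h1 := halt (a + b)
    simp only [map_add, LinearMap.add_apply, halt] at h1
    linarith
  -- symmetry of h a b := η a (I b)
  have hsym : ∀ a b : g, η a (I b) = η b (I a) := by
    intro a b
    have e1 : η (I b) (I (I a)) = η b (I a) := hinv b (I a)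
    have e2 : η (I b) (I (I a)) = - η (I b) a := by rw [hI a, map_neg]
    have e3 : η (I b) a = - η a (I b) := hanti a (I b)
    linarith
  have negsec : ∀ a b : g, η a (I (I b)) = - η a b := by
    intro a b; rw [hI b, map_neg]
  have hIfirst : ∀ v x : g, η (I v) x = - η v (I x) := by
    intro v x
    have e1 : η x (I v) = η v (I x) := hsym x v
    have e2 : η (I v) x = - η x (I v) := hanti x (I v)
    linarith
  -- membership in N
  have hmem : ∀ x : g, x ∈ N ↔ η x (I x) = 0 := by
    intro x; rw [hN]; exact Iff.rfl
  have h0N : (0 : g) ∈ N := by rw [hN]; simp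
  have hNneg : ∀ x ∈ N, -x ∈ N := by
    intro x hx
    have h2 := hNsmul (-1) x hx
    rwa [neg_one_smul] at h2
  -- Cauchy–Schwarz style null lemma
  have hcs : ∀ a : g, η a (I a) = 0 → ∀ b : g, η a (I b) = 0 := by
    intro a ha b
    by_contra hne
    set c : ℝ := η a (I b) with hc
    set t : ℝ := -(η b (I b) + 1) / (2 * c) with ht
    have hp := hpos (b + t • a)
    have hexp : η (b + t • a) (I (b + t • a))
        = η b (I b) + t * η b (I a) + t * η a (I b) + t * t * η a (I a) := by
      simp only [map_add, map_smul, LinearMap.add_apply, LinearMap.smul_apply, smul_eq_mul]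
      ring
    rw [hexp, ha, ← hsym a b] at hp
    have htc : t * c = -(η b (I b) + 1) / 2 := by
      rw [ht]; field_simp
    rw [← hc] at hp
    nlinarith [hp, htc]
  have hnull : ∀ n ∈ N, ∀ t : g, η n (I t) = 0 := by
    intro n hn t; exact hcs n ((hmem n).1 hn) t
  have hnull2 : ∀ n ∈ N, ∀ t : g, η t (I n) = 0 := by
    intro n hn t; rw [← hsym n t]; exact hnull n hn t
  have hnull3 : ∀ n ∈ N, ∀ t : g, η t n = 0 := by
    intro n hn t
    have e := hnull2 (I n) (hNI n hn) t
    rw [hI n, map_neg] at e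
    linarith
  have hnull4 : ∀ n ∈ N, ∀ t : g, η n t = 0 := by
    intro n hn t
    linarith [hanti n t, hnull3 n hn t]
  -- The main consequence of closedness, in convenient form.
  have L6 : ∀ x y w : g, η ⁅x, y⁆ (I w) = η ⁅I w, y⁆ x - η ⁅I w, x⁆ y := by
    intro x y w
    have hc := hclosed x y (I w)
    have e1 : ⁅y, I w⁆ = -⁅I w, y⁆ := (lie_skew y (I w)).symm
    rw [e1] at hc
    rw [eneg1] at hc
    linarith
  -- holomorphicity in convenient form
  have L7 : ∀ n ∈ N, ∀ y : g, ⁅y, n⁆ + I ⁅I y, n⁆ ∈ N := by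
    intro n hn y
    have e := hNhol n hn y
    have e2 : ⁅y, n⁆ + ⁅I y, I n⁆ + I ⁅I y, n⁆ - I ⁅y, I n⁆
        = (2 : ℝ) • (⁅y, n⁆ + I ⁅I y, n⁆) := by
      rw [hint y n]
      simp only [map_add, smul_add, two_smul]
      abel
    rw [e2] at e
    have e3 := hNsmul (1/2 : ℝ) _ e
    rwa [smul_smul, show ((1:ℝ)/2) * 2 = 1 by norm_num, one_smul] at e3
  -- nilpotency of all adjoint operators, with a uniform exponent
  obtain ⟨m, hm⟩ := LieAlgebra.nilpotent_ad_of_nilpotent_algebra ℝ g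
  -- (HB)
  have HB : ∀ n ∈ N, ∀ y t : g, η ⁅y, n⁆ (I t) = - η ⁅I y, n⁆ t := by
    intro n hn y t
    have hc := L7 n hn y
    have e := hnull _ hc t
    rw [eaddl] at e
    have e2 : η (I ⁅I y, n⁆) (I t) = η ⁅I y, n⁆ t := hinv _ _
    linarith
  -- antisymmetry of (x,t) ↦ η ⁅x,n⁆ (I t) for n ∈ N
  have Banti : ∀ n ∈ N, ∀ x t : g, η ⁅x, n⁆ (I t) = - η ⁅t, n⁆ (I x) := by
    intro n hn x t
    have e1 := L6 x n t
    have e2 : η ⁅I t, x⁆ n = 0 := hnull3 n hn _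
    have e3 := HB n hn t x
    linarith
  -- N is an ideal
  have L8 : ∀ n ∈ N, ∀ x : g, ⁅x, n⁆ ∈ N := by
    intro n hn x
    have skewA : ∀ a b : g, η ⁅n, a⁆ (I b) = - η ⁅n, b⁆ (I a) := by
      intro a b
      have e1 := Banti n hn a b
      have e2 : ⁅n, a⁆ = -⁅a, n⁆ := (lie_skew n a).symm
      have e3 : ⁅n, b⁆ = -⁅b, n⁆ := (lie_skew n b).symm
      rw [e2, e3, eneg1, eneg1]
      linarith
    set A := LieAlgebra.ad ℝ g n with hA
    have key : ∀ d q : ℕ, ∀ x : g, m ≤ q + 1 + d →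
        η ((A ^ (q+1)) x) (I ((A ^ (q+1)) x)) = 0 := by
      intro d
      induction d with
      | zero =>
        intro q x hq
        obtain ⟨r, hr⟩ : ∃ r, q + 1 = r + m := ⟨q + 1 - m, by omega⟩
        rw [hr, pow_add, hm n, mul_zero]
        simp
      | succ d ih =>
        intro q x hq
        have hv : (A ^ (q+1)) x = ⁅n, (A ^ q) x⁆ := by
          rw [pow_succ', Module.End.mul_apply, hA]
          exact LieAlgebra.ad_apply (R := ℝ) (L := g) n _
        have hv2 : (A ^ (q+2)) x = ⁅n, (A ^ (q+1)) x⁆ := by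
          rw [show q + 2 = (q+1) + 1 by omega, pow_succ', Module.End.mul_apply, hA]
          exact LieAlgebra.ad_apply (R := ℝ) (L := g) n _
        have ih2 := ih (q+1) x (by omega)
        have ihnull := hcs _ ih2
        have e1 := skewA ((A ^ q) x) ((A ^ (q+1)) x)
        rw [← hv] at e1
        rw [← hv2] at e1
        linarith [e1, ihnull ((A ^ q) x)]
    have fin := key m 0 x (by omega)
    rw [pow_one] at fin
    have e : A x = ⁅n, x⁆ := LieAlgebra.ad_apply (R := ℝ) (L := g) n x
    rw [e] at fin
    have hmemN : ⁅n, x⁆ ∈ N := (hmem _).2 fin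
    have e2 : ⁅x, n⁆ = -⁅n, x⁆ := (lie_skew x n).symm
    rw [e2]
    exact hNneg _ hmemN
  -- the "mod N" integrability consequence, for w central mod N
  have F2 : ∀ w : g, (∀ t : g, ⁅t, w⁆ ∈ N) →
      ∀ y : g, ⁅I y, I w⁆ - I ⁅y, I w⁆ ∈ N := by
    intro w Hw y
    have e : ⁅I y, I w⁆ - I ⁅y, I w⁆ = ⁅y, w⁆ + I ⁅I y, w⁆ := by
      rw [hint y w]; abel
    rw [e]
    exact hNadd _ (Hw y) _ (hNI _ (Hw (I y)))
  -- reduction of η ⁅I y, I w⁆ x mod N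
  have RED : ∀ w : g, (∀ t : g, ⁅t, w⁆ ∈ N) →
      ∀ y x : g, η ⁅I y, I w⁆ x = η ⁅I w, y⁆ (I x) := by
    intro w Hw y x
    have hn0 := F2 w Hw y
    have s1 : η ⁅I y, I w⁆ x
        = η (⁅I y, I w⁆ - I ⁅y, I w⁆) x + η (I ⁅y, I w⁆) x := by
      rw [esub]; ring
    have s2 : η (⁅I y, I w⁆ - I ⁅y, I w⁆) x = 0 := hnull4 _ hn0 x
    have s3 : η (I ⁅y, I w⁆) x = - η ⁅y, I w⁆ (I x) := hIfirst _ _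
    have s4 : ⁅y, I w⁆ = -⁅I w, y⁆ := (lie_skew y (I w)).symm
    have s4' : η ⁅y, I w⁆ (I x) = - η ⁅I w, y⁆ (I x) := by rw [s4, eneg1]
    linarith
  -- (S★)
  have F3 : ∀ w : g, (∀ t : g, ⁅t, w⁆ ∈ N) →
      ∀ x y : g, η ⁅I w, x⁆ (I y) + η ⁅I w, y⁆ (I x) = η ⁅I y, x⁆ (I w) := by
    intro w Hw x y
    have e1 := L6 (I w) x y
    have e2 := RED w Hw y x
    linarith
  -- Ψ symmetry
  have F4 : ∀ w : g, (∀ t : g, ⁅t, w⁆ ∈ N) →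
      ∀ x y : g, η ⁅I x, y⁆ (I w) = η ⁅I y, x⁆ (I w) := by
    intro w Hw x y
    have e0 := F3 w Hw (I x) (I y)
    -- RHS of e0
    have r1 : ⁅I (I y), I x⁆ = -⁅y, I x⁆ := by rw [hI y, neg_lie]
    have r2 : ⁅y, I x⁆ = -⁅I x, y⁆ := (lie_skew y (I x)).symm
    have r3 : η ⁅I (I y), I x⁆ (I w) = η ⁅I x, y⁆ (I w) := by
      rw [r1, r2, neg_neg]
    -- first term of LHS of e0
    have t1 : η ⁅I w, I x⁆ (I (I y)) = η ⁅I w, x⁆ (I y) := by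
      have b1 : η ⁅I w, I x⁆ (I (I y)) = - η ⁅I w, I x⁆ y := negsec _ _
      have b2 : η ⁅I w, I x⁆ y = - η ⁅I x, I w⁆ y := by
        rw [(lie_skew (I w) (I x)).symm, eneg1]
      have b3 : η ⁅I x, I w⁆ y = η ⁅I w, x⁆ (I y) := RED w Hw x y
      linarith
    have t2 : η ⁅I w, I y⁆ (I (I x)) = η ⁅I w, y⁆ (I x) := by
      have b1 : η ⁅I w, I y⁆ (I (I x)) = - η ⁅I w, I y⁆ x := negsec _ _
      have b2 : η ⁅I w, I y⁆ x = - η ⁅I y, I w⁆ x := by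
        rw [(lie_skew (I w) (I y)).symm, eneg1]
      have b3 : η ⁅I y, I w⁆ x = η ⁅I w, y⁆ (I x) := RED w Hw y x
      linarith
    rw [t1, t2, r3] at e0
    have e0' := F3 w Hw x y
    linarith
  have F5 : ∀ w : g, (∀ t : g, ⁅t, w⁆ ∈ N) →
      ∀ t : g, η ⁅I w, t⁆ (I w) = 0 := by
    intro w Hw t
    have e := F4 w Hw w t
    rw [e]
    exact hnull _ (Hw (I t)) w
  -- core: brackets with I w are in N, for w central mod N
  have L10 : ∀ w : g, (∀ t : g, ⁅t, w⁆ ∈ N) → ∀ x : g, ⁅I w, x⁆ ∈ N := by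
    intro w Hw x
    set A := LieAlgebra.ad ℝ g (I w) with hA
    have key : ∀ d q : ℕ, ∀ x : g, m ≤ q + 1 + d →
        η ((A ^ (q+1)) x) (I ((A ^ (q+1)) x)) = 0 := by
      intro d
      induction d with
      | zero =>
        intro q x hq
        obtain ⟨r, hr⟩ : ∃ r, q + 1 = r + m := ⟨q + 1 - m, by omega⟩
        rw [hr, pow_add, hm (I w), mul_zero]
        simp
      | succ d ih =>
        intro q x hq
        set y := (A ^ q) x with hy
        have hv : (A ^ (q+1)) x = ⁅I w, y⁆ := by
          rw [pow_succ', Module.End.mul_apply, hA, hy]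
          exact LieAlgebra.ad_apply (R := ℝ) (L := g) (I w) _
        have hv2 : (A ^ (q+2)) x = ⁅I w, ⁅I w, y⁆⁆ := by
          rw [show q + 2 = (q+1) + 1 by omega, pow_succ', Module.End.mul_apply, hv.symm, hA]
          rw [LieAlgebra.ad_apply (R := ℝ) (L := g) (I w) _, hv]
        have ih2 := ih (q+1) x (by omega)
        have ihnull := hcs _ ih2
        -- second term of (S★) vanishes
        have ee : η ⁅I w, ⁅I w, y⁆⁆ (I y) = 0 := by
          rw [← hv2]; exact ihnull y
        -- Jacobi
        have jac : ⁅I y, ⁅I w, y⁆⁆ = ⁅⁅I y, I w⁆, y⁆ + ⁅I w, ⁅I y, y⁆⁆ :=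
          leibniz_lie (I y) (I w) y
        have hn0 := F2 w Hw y
        have i2 : I ⁅y, I w⁆ = - I ⁅I w, y⁆ := by
          rw [(lie_skew y (I w)).symm, map_neg]
        have dec : ⁅I y, I w⁆ = (⁅I y, I w⁆ - I ⁅y, I w⁆) + I ⁅y, I w⁆ := by
          abel
        have scal : η ⁅I y, ⁅I w, y⁆⁆ (I w)
            = η ⁅(⁅I y, I w⁆ - I ⁅y, I w⁆), y⁆ (I w)
              + η ⁅I ⁅y, I w⁆, y⁆ (I w) + η ⁅I w, ⁅I y, y⁆⁆ (I w) := by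
          rw [jac, eaddl]
          nth_rewrite 1 [dec]
          rw [add_lie, eaddl]
        have s6 : η ⁅I ⁅y, I w⁆, y⁆ (I w) = - η ⁅I ⁅I w, y⁆, y⁆ (I w) := by
          rw [i2, neg_lie, eneg1]
        have e5 : η ⁅(⁅I y, I w⁆ - I ⁅y, I w⁆), y⁆ (I w) = 0 := by
          have hmemN : ⁅(⁅I y, I w⁆ - I ⁅y, I w⁆), y⁆ ∈ N := by
            have hb := L8 _ hn0 y
            have e : ⁅(⁅I y, I w⁆ - I ⁅y, I w⁆), y⁆
                = -⁅y, (⁅I y, I w⁆ - I ⁅y, I w⁆)⁆ :=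
              (lie_skew _ y).symm
            rw [e]; exact hNneg _ hb
          exact hnull _ hmemN w
        have e6 : η ⁅I w, ⁅I y, y⁆⁆ (I w) = 0 := F5 w Hw _
        have e7 := F4 w Hw ⁅I w, y⁆ y
        -- e7 : η ⁅I ⁅I w,y⁆, y⁆ (I w) = η ⁅I y, ⁅I w, y⁆⁆ (I w)
        have e0 := F3 w Hw y ⁅I w, y⁆
        rw [hv]
        linarith [e0, ee, scal, s6, e5, e6, e7]
    have fin := key m 0 x (by omega)
    rw [pow_one] at fin
    have e : A x = ⁅I w, x⁆ := LieAlgebra.ad_apply (R := ℝ) (L := g) (I w) x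
    rw [e] at fin
    exact (hmem _).2 fin
  -- a bracket which is central mod N lies in N
  have CORE : ∀ a b : g, (∀ t : g, ⁅t, ⁅a, b⁆⁆ ∈ N) → ⁅a, b⁆ ∈ N := by
    intro a b Hw
    apply (hmem _).2
    have e := L6 a b ⁅a, b⁆
    have e1 : η ⁅I ⁅a, b⁆, b⁆ a = 0 := hnull4 _ (L10 _ Hw b) a
    have e2 : η ⁅I ⁅a, b⁆, a⁆ b = 0 := hnull4 _ (L10 _ Hw a) b
    rw [e1, e2] at e
    simpa using e
  -- descending induction along the lower central series
  obtain ⟨K, hK⟩ := LieModule.IsNilpotent.nilpotent ℝ g g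
  have STEP : ∀ i : ℕ,
      (∀ z : g, z ∈ LieModule.lowerCentralSeries ℝ g g (i+2) → z ∈ N) →
      ∀ z : g, z ∈ LieModule.lowerCentralSeries ℝ g g (i+1) → z ∈ N := by
    intro i hnext z hz
    rw [LieModule.lowerCentralSeries_succ, ← LieSubmodule.mem_toSubmodule,
      LieSubmodule.lieIdeal_oper_eq_linear_span'] at hz
    refine Submodule.span_induction ?_ h0N ?_ ?_ hz
    · rintro w ⟨x, -, u, hu, rfl⟩
      have hxw : ⁅x, u⁆ ∈ LieModule.lowerCentralSeries ℝ g g (i+1) := by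
        rw [LieModule.lowerCentralSeries_succ]
        exact LieSubmodule.lie_mem_lie (LieSubmodule.mem_top x) hu
      apply CORE x u
      intro t
      apply hnext
      rw [show i + 2 = (i+1) + 1 by omega, LieModule.lowerCentralSeries_succ]
      exact LieSubmodule.lie_mem_lie (LieSubmodule.mem_top t) hxw
    · intro p q _ _ hp hq; exact hNadd _ hp _ hq
    · intro c p _ hp; exact hNsmul c _ hp
  have desc : ∀ d i : ℕ, K ≤ i + 1 + d →
      ∀ z : g, z ∈ LieModule.lowerCentralSeries ℝ g g (i+1) → z ∈ N := by
    intro d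
    induction d with
    | zero =>
      intro i hKi z hz
      have hle : LieModule.lowerCentralSeries ℝ g g (i+1)
          ≤ LieModule.lowerCentralSeries ℝ g g K :=
        LieModule.antitone_lowerCentralSeries ℝ g g (by omega)
      have hzb : z ∈ (⊥ : LieSubmodule ℝ g g) := by rw [← hK]; exact hle hz
      rw [LieSubmodule.mem_bot] at hzb
      rw [hzb]; exact h0N
    | succ d ih =>
      intro i hKi z hz
      exact STEP i (fun z' hz' => ih (i+1) (by omega) z' hz') z hz
  have main : ∀ z : g, z ∈ LieModule.lowerCentralSeries ℝ g g 1 → z ∈ N :=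
    desc K 0 (by omega)
  have mainD : ∀ z : g, z ∈ (LieAlgebra.derivedSeries ℝ g 1).toSubmodule → z ∈ N := by
    intro z hz
    have hz' : z ∈ LieAlgebra.derivedSeries ℝ g 1 :=
      (LieSubmodule.mem_toSubmodule _).1 hz
    exact main z (LieModule.derivedSeries_le_lowerCentralSeries (R := ℝ) (L := g) 1 hz')
  intro x hx
  rw [Submodule.mem_sup] at hx
  obtain ⟨y, hy, z, hz, rfl⟩ := hx
  obtain ⟨y', hy', rfl⟩ := Submodule.mem_map.1 hz
  exact hNadd _ (mainD _ hy) _ (hNI _ (mainD _ hy'))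
end

section
/- Let g be a finite-dimensional nilpotent real Lie algebra with an integrable complex structure I, and let η be a closed semipositive Hermitian form on (g, I). Assume the null-space N(η) is a holomorphic Lie subalgebra of g. Then N(η) is an ideal of g, i.e. [y, x] ∈ N(η) for every x ∈ N(η) and every y ∈ g. -/
private def iterBr {g : Type*} [LieRing g] (x : g) : ℕ → g → g
  | 0, y => y
  | k + 1, y => ⁅iterBr x k y, x⁆

theorem nullspace_is_ideal
    (g : Type*) [LieRing g] [LieAlgebra ℝ g] [FiniteDimensional ℝ g]
    [LieRing.IsNilpotent g]
    (I : g →ₗ[ℝ] g) (hI : ∀ x, I (I x) = -x)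
    (hint : ∀ x y : g, ⁅I x, I y⁆ = ⁅x, y⁆ + I ⁅I x, y⁆ + I ⁅x, I y⁆)
    (η : g →ₗ[ℝ] g →ₗ[ℝ] ℝ) (halt : ∀ x, η x x = 0)
    (hinv : ∀ x y, η (I x) (I y) = η x y)
    (hpos : ∀ x, 0 ≤ η x (I x))
    (hclosed : ∀ x y z : g, η ⁅x, y⁆ z + η ⁅y, z⁆ x + η ⁅z, x⁆ y = 0)
    (N : Set g) (hN : N = {x : g | η x (I x) = 0})
    -- `N(η)` is a Lie subalgebra:
    (hNadd : ∀ x ∈ N, ∀ y ∈ N, x + y ∈ N)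
    (hNsmul : ∀ (c : ℝ), ∀ x ∈ N, c • x ∈ N)
    (hNbra : ∀ x ∈ N, ∀ y ∈ N, ⁅x, y⁆ ∈ N)
    -- `N(η)` is `I`-invariant and holomorphic:
    (hNI : ∀ x ∈ N, I x ∈ N)
    (hNhol : ∀ x ∈ N, ∀ y : g,
      ⁅y, x⁆ + ⁅I y, I x⁆ + I ⁅I y, x⁆ - I ⁅y, I x⁆ ∈ N) :
    ∀ x ∈ N, ∀ y : g, ⁅y, x⁆ ∈ N := by
  -- η is antisymmetric
  have hskew : ∀ u v : g, η v u = - η u v := by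
    intro u v
    have h1 := halt (u + v)
    simp only [map_add, LinearMap.add_apply] at h1
    rw [halt u, halt v] at h1
    linarith
  -- moving I across η
  have hImove : ∀ u v : g, η (I u) v = - η u (I v) := by
    intro u v
    have h := hinv (I u) v
    rw [hI u] at h
    simp only [map_neg, LinearMap.neg_apply] at h
    linarith
  -- symmetry of the hermitian form h(u,v) = η u (I v)
  have hsymm : ∀ u v : g, η v (I u) = η u (I v) := by
    intro u v
    rw [hskew (I u) v, hImove u v, neg_neg]
  -- N is the radical of η
  have hrad : ∀ u ∈ N, ∀ z : g, η u z = 0 := by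
    intro u hu z
    have huu : η u (I u) = 0 := by rw [hN] at hu; exact hu
    have key : ∀ w : g, η u (I w) = 0 := by
      intro w
      set c := η u (I w) with hc
      set d := η w (I w) with hd
      have hdnn : 0 ≤ d := hpos w
      have hq : ∀ t : ℝ, 0 ≤ 2 * t * c + t ^ 2 * d := by
        intro t
        have := hpos (u + t • w)
        simp only [map_add, map_smul, LinearMap.add_apply, LinearMap.smul_apply,
          smul_eq_mul] at this
        rw [huu, hsymm u w] at this
        nlinarith [this]
      by_contra hcne
      have hc2 : 0 < c ^ 2 := by positivity
      have he : (0:ℝ) < d + 1 := by linarith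
      have h2 := hq (-(c / (d + 1)))
      have hexp : 2 * (-(c / (d + 1))) * c + (-(c / (d + 1))) ^ 2 * d
          = -(c ^ 2) * (d + 2) / (d + 1) ^ 2 := by
        field_simp
        ring
      rw [hexp] at h2
      have hlt : -(c ^ 2) * (d + 2) / (d + 1) ^ 2 < 0 := by
        apply div_neg_of_neg_of_pos
        · nlinarith
        · positivity
      linarith
    have : η u (I (-(I z))) = 0 := key _
    rw [map_neg, hI z] at this
    simpa using this
  -- h(u, v) vanishes if v ∈ N
  have hvan : ∀ (u : g), ∀ v ∈ N, η u (I v) = 0 := by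
    intro u v hv
    have := hrad (I v) (hNI v hv) u
    rw [hskew]
    linarith [this]
  -- zero is in N
  have hzero : (0 : g) ∈ N := by rw [hN]; simp
  -- holomorphicity + integrability : ⁅y,x⁆ + I ⁅I y, x⁆ ∈ N
  have hhol1 : ∀ x ∈ N, ∀ y : g, ⁅y, x⁆ + I ⁅I y, x⁆ ∈ N := by
    intro x hx y
    have hw := hNhol x hx y
    have hintyx := hint y x
    have hexp : ⁅y, x⁆ + ⁅I y, I x⁆ + I ⁅I y, x⁆ - I ⁅y, I x⁆
        = (2 : ℝ) • (⁅y, x⁆ + I ⁅I y, x⁆) := by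
      rw [hintyx]; module
    rw [hexp] at hw
    have := hNsmul (1/2 : ℝ) _ hw
    rw [smul_smul] at this
    norm_num at this
    exact this
  -- consequence: I ⁅y,x⁆ - ⁅I y, x⁆ ∈ N
  have hhol2 : ∀ x ∈ N, ∀ y : g, I ⁅y, x⁆ - ⁅I y, x⁆ ∈ N := by
    intro x hx y
    have := hNI _ (hhol1 x hx y)
    rw [map_add, hI] at this
    simpa [sub_eq_add_neg] using this
  -- symmetry of f(y,z) = η ⁅y,x⁆ z
  have hfsymm : ∀ x ∈ N, ∀ y z : g, η ⁅y, x⁆ z = η ⁅z, x⁆ y := by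
    intro x hx y z
    have h1 := hclosed y x z
    have h2 : η ⁅z, y⁆ x = 0 := by
      rw [hskew]; simp [hrad x hx ⁅z, y⁆]
    have h3 : η ⁅x, z⁆ y = - η ⁅z, x⁆ y := by
      rw [← lie_skew x z, map_neg, LinearMap.neg_apply]
    rw [h2, h3] at h1
    linarith
  -- skew-adjointness of y ↦ ⁅y, x⁆ w.r.t. h
  have hSskew : ∀ x ∈ N, ∀ y z : g, η ⁅y, x⁆ (I z) = - η ⁅z, x⁆ (I y) := by
    intro x hx y z
    rw [hfsymm x hx y (I z)]
    have hd : η ⁅I z, x⁆ y = η (I ⁅z, x⁆) y := by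
      have h0 := hrad _ (hhol2 x hx z) y
      simp only [map_sub, LinearMap.sub_apply] at h0
      linarith
    rw [hd, hImove]
  -- ad x is nilpotent
  intro x hx y
  obtain ⟨n, hn⟩ := LieModule.isNilpotent_toEnd_of_isNilpotent ℝ g g x
  -- iterBr in terms of powers of ad
  have hiter : ∀ (k : ℕ) (y : g),
      iterBr x k y = ((-1 : ℝ) ^ k) • (((LieModule.toEnd ℝ g g x) ^ k) y) := by
    intro k
    induction k with
    | zero => intro y; simp [iterBr]
    | succ k ih =>
      intro y
      have hbr : ∀ u : g, ⁅u, x⁆ = -((LieModule.toEnd ℝ g g x) u) := by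
        intro u
        have h := lie_skew x u
        simp only [LieModule.toEnd_apply_apply]
        rw [← h, neg_neg]
      show ⁅iterBr x k y, x⁆ = _
      rw [ih y, smul_lie, hbr]
      have hp : ((LieModule.toEnd ℝ g g x) ^ (k + 1)) y
          = (LieModule.toEnd ℝ g g x) (((LieModule.toEnd ℝ g g x) ^ k) y) := by
        rw [pow_succ', Module.End.mul_apply]
      rw [hp, pow_succ, mul_smul, neg_one_smul, smul_neg]
  have hhigh : ∀ (k : ℕ), n ≤ k → ∀ y : g, iterBr x k y = 0 := by
    intro k hk y
    rw [hiter k y]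
    have : (LieModule.toEnd ℝ g g x) ^ k = 0 := by
      calc (LieModule.toEnd ℝ g g x) ^ k
          = (LieModule.toEnd ℝ g g x) ^ (k - n) * (LieModule.toEnd ℝ g g x) ^ n := by
            rw [← pow_add]; congr 1; omega
        _ = 0 := by rw [hn, mul_zero]
    rw [this]
    simp
  -- main downward induction
  have main : ∀ m : ℕ, ∀ k : ℕ, 1 ≤ k → n ≤ k + m → ∀ y : g, iterBr x k y ∈ N := by
    intro m
    induction m with
    | zero =>
      intro k _ hk y
      rw [hhigh k (by omega) y]
      exact hzero
    | succ m ih =>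
      intro k hk1 hkm y
      by_cases hcase : n ≤ k + m
      · exact ih k hk1 hcase y
      · obtain ⟨k', rfl⟩ : ∃ k', k = k' + 1 := ⟨k - 1, by omega⟩
        -- iterBr x (k'+1) y = ⁅v, x⁆ with v = iterBr x k' y
        rw [hN]
        show η ⁅iterBr x k' y, x⁆ (I ⁅iterBr x k' y, x⁆) = 0
        have hnext : iterBr x (k' + 2) y ∈ N := ih (k' + 2) (by omega) (by omega) y
        have := hSskew x hx (iterBr x k' y) ⁅iterBr x k' y, x⁆
        have h0 : η ⁅⁅iterBr x k' y, x⁆, x⁆ (I (iterBr x k' y)) = 0 := by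
          have : ⁅⁅iterBr x k' y, x⁆, x⁆ = iterBr x (k' + 2) y := rfl
          rw [this]
          exact hrad _ hnext _
        rw [h0] at this
        simpa using this
  have := main n 1 le_rfl (by omega) y
  simpa [iterBr] using this
end

section
/- Let g be a finite-dimensional nilpotent real Lie algebra with an integrable complex structure I, and let η be a closed semipositive Hermitian form on (g, I) whose null-space N(η) is a holomorphic Lie subalgebra. Then for every x ∈ N(η) and every y ∈ g one has η([y, x], I[y, x]) = -η([x, [x, y]], Iy), i.e. η([y,x], I[y,x]) = -η(ad_x²(y), Iy). -/
theorem eta_bracket_eq_neg_ad_sq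
    (g : Type*) [LieRing g] [LieAlgebra ℝ g] [FiniteDimensional ℝ g]
    [LieRing.IsNilpotent g]
    (I : g →ₗ[ℝ] g) (hI : ∀ x, I (I x) = -x)
    (hint : ∀ x y : g, ⁅I x, I y⁆ = ⁅x, y⁆ + I ⁅I x, y⁆ + I ⁅x, I y⁆)
    (η : g →ₗ[ℝ] g →ₗ[ℝ] ℝ) (halt : ∀ x, η x x = 0)
    (hinv : ∀ x y, η (I x) (I y) = η x y)
    (hpos : ∀ x, 0 ≤ η x (I x))
    (hclosed : ∀ x y z : g, η ⁅x, y⁆ z + η ⁅y, z⁆ x + η ⁅z, x⁆ y = 0)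
    (N : Set g) (hN : N = {x : g | η x (I x) = 0})
    -- `N(η)` is a Lie subalgebra:
    (hNadd : ∀ x ∈ N, ∀ y ∈ N, x + y ∈ N)
    (hNsmul : ∀ (c : ℝ), ∀ x ∈ N, c • x ∈ N)
    (hNbra : ∀ x ∈ N, ∀ y ∈ N, ⁅x, y⁆ ∈ N)
    -- `N(η)` is `I`-invariant and holomorphic:
    (hNI : ∀ x ∈ N, I x ∈ N)
    (hNhol : ∀ x ∈ N, ∀ y : g,
      ⁅y, x⁆ + ⁅I y, I x⁆ + I ⁅I y, x⁆ - I ⁅y, I x⁆ ∈ N) :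
    ∀ x ∈ N, ∀ y : g, η ⁅y, x⁆ (I ⁅y, x⁆) = -η ⁅x, ⁅x, y⁆⁆ (I y) := by
  intro x hx y
  subst hN
  -- antisymmetry of η
  have hanti : ∀ a b : g, η a b = -η b a := by
    intro a b
    have h := halt (a + b)
    simp only [map_add, LinearMap.add_apply, halt] at h
    linarith
  -- symmetry of B(a,b) = η a (I b)
  have hBsymm : ∀ a b : g, η a (I b) = η b (I a) := by
    intro a b
    have h1 := hinv b (I a)
    rw [hI, map_neg] at h1
    have h2 := hanti (I b) a
    linarith
  -- Cauchy–Schwarz: elements of N are in the radical of B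
  have hrad1 : ∀ a : g, η a (I a) = 0 → ∀ b : g, η a (I b) = 0 := by
    intro a ha b
    by_contra hb
    have key : ∀ t : ℝ, 0 ≤ η b (I b) + t * (2 * η a (I b)) := by
      intro t
      have h := hpos (b + t • a)
      simp only [map_add, map_smul, LinearMap.add_apply, LinearMap.smul_apply,
        smul_eq_mul] at h
      rw [ha] at h
      have h2 := hBsymm a b
      rw [← h2] at h
      ring_nf at h ⊢
      linarith
    have h2 := key (-(η b (I b) + 1) / (2 * η a (I b)))
    rw [div_mul_cancel₀ _ (mul_ne_zero two_ne_zero hb)] at h2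
    linarith
  -- elements of N are in the radical of η
  have hrad : ∀ a : g, a ∈ {x : g | η x (I x) = 0} → ∀ b : g, η a b = 0 := by
    intro a ha b
    have h1 : η a (I (I b)) = 0 := hrad1 a ha (I b)
    rw [hI, map_neg] at h1
    linarith
  have hrad2 : ∀ a : g, a ∈ {x : g | η x (I x) = 0} → ∀ b : g, η b a = 0 := by
    intro a ha b
    rw [hanti, hrad a ha b]; ring
  -- ad_x is η-self-adjoint (x ∈ radical)
  have hskew : ∀ u v : g, η ⁅x, u⁆ v = η ⁅x, v⁆ u := by
    intro u v
    have h := hclosed x u v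
    rw [hrad2 x hx ⁅u, v⁆] at h
    have hvx : ⁅v, x⁆ = -⁅x, v⁆ := by rw [← lie_skew]
    rw [hvx, map_neg, LinearMap.neg_apply] at h
    linarith
  -- from holomorphicity + integrability : I⁅y,x⁆ - ⁅Iy,x⁆ ∈ N
  have hv : (⁅y, x⁆ + I ⁅I y, x⁆) ∈ {x : g | η x (I x) = 0} := by
    have hw := hNhol x hx y
    have key : ⁅y, x⁆ + ⁅I y, I x⁆ + I ⁅I y, x⁆ - I ⁅y, I x⁆
        = (2:ℝ) • (⁅y, x⁆ + I ⁅I y, x⁆) := by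
      rw [hint y x]
      module
    rw [key] at hw
    have h2 := hNsmul (1/2) _ hw
    rwa [smul_smul, one_div, inv_mul_cancel₀ (by norm_num : (2:ℝ) ≠ 0), one_smul] at h2
  have hn : (I ⁅y, x⁆ - ⁅I y, x⁆) ∈ {x : g | η x (I x) = 0} := by
    have h2 := hNI _ hv
    rw [map_add, hI] at h2
    have : I ⁅y, x⁆ + -⁅I y, x⁆ = I ⁅y, x⁆ - ⁅I y, x⁆ := by abel
    rwa [this] at h2
  have hbn := hNbra x hx _ hn
  -- main computation
  have step1 : η ⁅y, x⁆ (I ⁅y, x⁆) = -η ⁅x, I ⁅y, x⁆⁆ y := by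
    have h := hclosed y x (I ⁅y, x⁆)
    rw [hrad2 x hx ⁅I ⁅y, x⁆, y⁆] at h
    linarith
  have step2 : η ⁅x, I ⁅y, x⁆⁆ y = -η ⁅x, ⁅x, I y⁆⁆ y := by
    have hdec : (I ⁅y, x⁆ : g) = (I ⁅y, x⁆ - ⁅I y, x⁆) + ⁅I y, x⁆ := by abel
    have hIyx : (⁅I y, x⁆ : g) = -⁅x, I y⁆ := by rw [← lie_skew]
    calc η ⁅x, I ⁅y, x⁆⁆ y
        = η ⁅x, (I ⁅y, x⁆ - ⁅I y, x⁆) + ⁅I y, x⁆⁆ y := by rw [← hdec]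
      _ = η ⁅x, I ⁅y, x⁆ - ⁅I y, x⁆⁆ y + η ⁅x, ⁅I y, x⁆⁆ y := by
          rw [lie_add, map_add, LinearMap.add_apply]
      _ = η ⁅x, ⁅I y, x⁆⁆ y := by rw [hrad _ hbn y]; ring
      _ = -η ⁅x, ⁅x, I y⁆⁆ y := by
          rw [hIyx, lie_neg, map_neg, LinearMap.neg_apply]
  have step3 : η ⁅x, ⁅x, I y⁆⁆ y = η ⁅x, y⁆ ⁅x, I y⁆ := hskew _ _
  have step4 : η ⁅x, ⁅x, y⁆⁆ (I y) = η ⁅x, I y⁆ ⁅x, y⁆ := hskew _ _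
  have step5 := hanti ⁅x, I y⁆ ⁅x, y⁆
  linarith
end

section
/- Let g be a finite-dimensional nilpotent real Lie algebra with an integrable complex structure I, and let η be a closed semipositive Hermitian form on (g, I) whose null-space N(η) is a holomorphic Lie subalgebra. Then for every x ∈ N(η) and all y, z ∈ g one has η([y, x], z) = -η(I[Iy, x], z). -/
theorem eta_bracket_skew
    (g : Type*) [LieRing g] [LieAlgebra ℝ g] [FiniteDimensional ℝ g]
    [LieRing.IsNilpotent g]
    (I : g →ₗ[ℝ] g) (hI : ∀ x, I (I x) = -x)
    (hint : ∀ x y : g, ⁅I x, I y⁆ = ⁅x, y⁆ + I ⁅I x, y⁆ + I ⁅x, I y⁆)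
    (η : g →ₗ[ℝ] g →ₗ[ℝ] ℝ) (halt : ∀ x, η x x = 0)
    (hinv : ∀ x y, η (I x) (I y) = η x y)
    (hpos : ∀ x, 0 ≤ η x (I x))
    (hclosed : ∀ x y z : g, η ⁅x, y⁆ z + η ⁅y, z⁆ x + η ⁅z, x⁆ y = 0)
    (N : Set g) (hN : N = {x : g | η x (I x) = 0})
    -- `N(η)` is a Lie subalgebra:
    (hNadd : ∀ x ∈ N, ∀ y ∈ N, x + y ∈ N)
    (hNsmul : ∀ (c : ℝ), ∀ x ∈ N, c • x ∈ N)
    (hNbra : ∀ x ∈ N, ∀ y ∈ N, ⁅x, y⁆ ∈ N)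
    -- `N(η)` is `I`-invariant and holomorphic:
    (hNI : ∀ x ∈ N, I x ∈ N)
    (hNhol : ∀ x ∈ N, ∀ y : g,
      ⁅y, x⁆ + ⁅I y, I x⁆ + I ⁅I y, x⁆ - I ⁅y, I x⁆ ∈ N) :
    ∀ x ∈ N, ∀ y z : g, η ⁅y, x⁆ z = -η (I ⁅I y, x⁆) z := by
  intro x hx y z
  -- skew-symmetry of η
  have hskew : ∀ a b : g, η a b = -η b a := by
    intro a b
    have h := halt (a + b)
    simp only [map_add, LinearMap.add_apply] at h
    have ha := halt a; have hb := halt b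
    linarith
  -- symmetry of the associated form B a b = η a (I b)
  have hsymm : ∀ a b : g, η a (I b) = η b (I a) := by
    intro a b
    have h := hinv a (I b)
    rw [hI] at h
    simp only [map_neg] at h
    have := hskew (I a) b
    linarith
  -- null vectors annihilate everything
  have hnull : ∀ w : g, η w (I w) = 0 → ∀ u : g, η w u = 0 := by
    intro w hw u
    have key : ∀ v : g, η w (I v) = 0 := by
      intro v
      have expand : ∀ t : ℝ,
          0 ≤ 2 * t * η w (I v) + t ^ 2 * η v (I v) := by
        intro t
        have h := hpos (w + t • v)
        simp only [map_add, map_smul, LinearMap.add_apply, LinearMap.smul_apply,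
          smul_eq_mul] at h
        have hs := hsymm v w
        rw [hw, hs] at h
        ring_nf at h ⊢
        linarith
      set c := η w (I v) with hc
      set d := η v (I v) with hd
      have hd0 : 0 ≤ d := hpos v
      have h1 := expand (-c / (d + 1))
      have hdp : (0:ℝ) < d + 1 := by linarith
      have hne : (d + 1) ≠ 0 := ne_of_gt hdp
      have heq : 2 * (-c / (d + 1)) * c + (-c / (d + 1)) ^ 2 * d
          = -(c ^ 2 * (d + 2)) / (d + 1) ^ 2 := by
        field_simp
        ring
      rw [heq] at h1
      have hpos2 : (0:ℝ) < (d + 1) ^ 2 := by positivity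
      have h3 := mul_nonneg h1 hpos2.le
      rw [div_mul_cancel₀ _ (ne_of_gt hpos2)] at h3
      have hc2 : c ^ 2 ≤ 0 := by nlinarith
      have hc0 : c ^ 2 = 0 := le_antisymm hc2 (sq_nonneg c)
      have := pow_eq_zero_iff (n := 2) (by norm_num) |>.mp hc0
      exact this
    have h := key (-(I u))
    simp only [map_neg, hI, neg_neg, map_neg, LinearMap.map_neg] at h
    exact h
  -- the key element w = ⁅y,x⁆ + I ⁅I y, x⁆ lies in N
  have hIx2 := hint y x
  have ha := hNhol x hx y
  have haw : ⁅y, x⁆ + ⁅I y, I x⁆ + I ⁅I y, x⁆ - I ⁅y, I x⁆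
      = (2:ℝ) • (⁅y, x⁆ + I ⁅I y, x⁆) := by
    rw [hIx2]; module
  have hw2 : (2:ℝ) • (⁅y, x⁆ + I ⁅I y, x⁆) ∈ N := haw ▸ ha
  have hwN : ⁅y, x⁆ + I ⁅I y, x⁆ ∈ N := by
    have := hNsmul (1/2 : ℝ) _ hw2
    rwa [smul_smul, show (1/2 : ℝ) * 2 = 1 by norm_num, one_smul] at this
  rw [hN] at hwN
  have h0 : ∀ u, η (⁅y, x⁆ + I ⁅I y, x⁆) u = 0 := hnull _ hwN
  have hz := h0 z
  simp only [map_add, LinearMap.add_apply] at hz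
  linarith
end

section
/- Let g be a finite-dimensional nilpotent real Lie algebra with an integrable complex structure I, and let η be a closed semipositive Hermitian form on (g, I) whose null-space N(η) is a holomorphic Lie subalgebra. Let g = g⁰ ⊇ g¹ ⊇ g² ⊇ … be the lower central series, g^{i+1} = [g, g^i]. Then for every i ≥ 0: if [N(η), g^{i+1}] ⊆ N(η), then [N(η), g^i] ⊆ N(η). -/
theorem lcs_induction_step
    (g : Type*) [LieRing g] [LieAlgebra ℝ g] [FiniteDimensional ℝ g]
    [LieRing.IsNilpotent g]
    (I : g →ₗ[ℝ] g) (hI : ∀ x, I (I x) = -x)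
    (hint : ∀ x y : g, ⁅I x, I y⁆ = ⁅x, y⁆ + I ⁅I x, y⁆ + I ⁅x, I y⁆)
    (η : g →ₗ[ℝ] g →ₗ[ℝ] ℝ) (halt : ∀ x, η x x = 0)
    (hinv : ∀ x y, η (I x) (I y) = η x y)
    (hpos : ∀ x, 0 ≤ η x (I x))
    (hclosed : ∀ x y z : g, η ⁅x, y⁆ z + η ⁅y, z⁆ x + η ⁅z, x⁆ y = 0)
    (N : Set g) (hN : N = {x : g | η x (I x) = 0})
    -- `N(η)` is a Lie subalgebra:
    (hNadd : ∀ x ∈ N, ∀ y ∈ N, x + y ∈ N)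
    (hNsmul : ∀ (c : ℝ), ∀ x ∈ N, c • x ∈ N)
    (hNbra : ∀ x ∈ N, ∀ y ∈ N, ⁅x, y⁆ ∈ N)
    -- `N(η)` is `I`-invariant and holomorphic:
    (hNI : ∀ x ∈ N, I x ∈ N)
    (hNhol : ∀ x ∈ N, ∀ y : g,
      ⁅y, x⁆ + ⁅I y, I x⁆ + I ⁅I y, x⁆ - I ⁅y, I x⁆ ∈ N) :
    ∀ i : ℕ,
      (∀ x ∈ N, ∀ y ∈ LieModule.lowerCentralSeries ℝ g g (i + 1), ⁅x, y⁆ ∈ N) →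
      (∀ x ∈ N, ∀ y ∈ LieModule.lowerCentralSeries ℝ g g i, ⁅x, y⁆ ∈ N) := by
  -- η is skew-symmetric
  have hskew : ∀ x y : g, η y x = -η x y := by
    intro x y
    have h := halt (x + y)
    rw [map_add] at h
    simp only [LinearMap.add_apply, map_add, halt] at h
    linarith
  -- slide I across η
  have hIslide : ∀ u v : g, η (I u) v = -η u (I v) := by
    intro u v
    have h2 := hinv (I u) v
    rw [hI, map_neg, LinearMap.neg_apply] at h2
    linarith
  -- the Hermitian form h(u,v) = η u (I v) is symmetric
  have hsym : ∀ u v : g, η u (I v) = η v (I u) := by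
    intro u v
    have h1 := hIslide v (I u)
    rw [hI, map_neg] at h1
    have h2 := hskew u (I v)
    have h3 := hinv v u
    have h4 := hskew (I v) (I u)
    -- η v (I u) = -η (I u) v = η u (I (I v))?? use hIslide u (v)
    have h5 := hIslide u v   -- η (I u) v = -η u (I v)
    have h6 := hskew v (I u) -- η (I u) v = -η v (I u)
    linarith
  -- N is the radical of η
  have hrad : ∀ x ∈ N, ∀ z : g, η x z = 0 := by
    intro x hx z
    rw [hN, Set.mem_setOf_eq] at hx
    have key : ∀ v : g, η x (I v) = 0 := by
      intro v
      have hquad : ∀ t : ℝ, 0 ≤ η v (I v) * t ^ 2 + 2 * η x (I v) * t := by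
        intro t
        have hp := hpos (x + t • v)
        rw [map_add, map_smul] at hp
        simp only [map_add, map_smul, LinearMap.add_apply, LinearMap.smul_apply,
          smul_eq_mul] at hp
        have h5 := hsym v x
        rw [hx, h5] at hp
        ring_nf at hp ⊢
        linarith
      have ha0 : 0 ≤ η v (I v) := hpos v
      set a : ℝ := η v (I v)
      set b : ℝ := η x (I v)
      by_contra hb0
      have hq := hquad (-b / (a + 1))
      have h1 : 0 < a + 1 := by linarith
      have hbb : 0 < b ^ 2 := by positivity
      have hexpand : a * (-b / (a + 1)) ^ 2 + 2 * b * (-b / (a + 1))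
          = (a * b ^ 2 - 2 * b ^ 2 * (a + 1)) / (a + 1) ^ 2 := by
        field_simp
        ring
      rw [hexpand] at hq
      have hnum : 0 ≤ a * b ^ 2 - 2 * b ^ 2 * (a + 1) := by
        have := (div_nonneg_iff.mp hq)
        rcases this with ⟨h, _⟩ | ⟨_, h⟩
        · exact h
        · nlinarith
      nlinarith
    have := key (-(I z))
    rw [map_neg, hI, neg_neg] at this
    exact this
  -- symmetry of B_x(u,v) = η ⁅x,u⁆ v for x ∈ N
  have hBsym : ∀ x ∈ N, ∀ u v : g, η ⁅x, u⁆ v = η ⁅x, v⁆ u := by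
    intro x hx u v
    have hc := hclosed x u v
    have h1 : η ⁅u, v⁆ x = 0 := by
      rw [hskew x ⁅u, v⁆, hrad x hx]; ring
    have h2 : η ⁅v, x⁆ u = -η ⁅x, v⁆ u := by
      rw [← lie_skew x v, map_neg, LinearMap.neg_apply, neg_neg]
    linarith
  -- key identity from holomorphicity: for x ∈ N,
  -- η ⁅I x, I u⁆ v + η ⁅I x, u⁆ (I v) = 0
  have hQ : ∀ x ∈ N, ∀ u v : g,
      η ⁅I x, I u⁆ v + η ⁅I x, u⁆ (I v) = 0 := by
    intro x hx u v
    -- (A) from hNhol and hrad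
    have hA0 := hrad _ (hNhol x hx u) v
    simp only [map_add, map_sub, LinearMap.add_apply, LinearMap.sub_apply] at hA0
    rw [hIslide ⁅I u, x⁆ v, hIslide ⁅u, I x⁆ v] at hA0
    -- hA0 : η ⁅u,x⁆ v + η ⁅Iu,Ix⁆ v + (-η ⁅Iu,x⁆ (Iv)) - (-η ⁅u,Ix⁆ (Iv)) = 0
    have e1 : η ⁅u, x⁆ v = -η ⁅x, u⁆ v := by
      rw [← lie_skew x u, map_neg, LinearMap.neg_apply, neg_neg]
    have e2 : η ⁅I u, I x⁆ v = -η ⁅I x, I u⁆ v := by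
      rw [← lie_skew (I x) (I u), map_neg, LinearMap.neg_apply, neg_neg]
    have e3 : η ⁅I u, x⁆ (I v) = -η ⁅x, I u⁆ (I v) := by
      rw [← lie_skew x (I u), map_neg, LinearMap.neg_apply, neg_neg]
    have e4 : η ⁅u, I x⁆ (I v) = -η ⁅I x, u⁆ (I v) := by
      rw [← lie_skew (I x) u, map_neg, LinearMap.neg_apply, neg_neg]
    -- (B) from integrability and invariance
    have hIbr : I ⁅x, u⁆ = I ⁅I x, I u⁆ + ⁅I x, u⁆ + ⁅x, I u⁆ := by
      have h := congrArg I (hint x u)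
      rw [map_add, map_add, hI, hI] at h
      rw [h]
      abel
    have hB : η ⁅x, u⁆ v = η ⁅I x, I u⁆ v + η ⁅I x, u⁆ (I v) + η ⁅x, I u⁆ (I v) := by
      have h := hinv ⁅x, u⁆ v
      rw [hIbr, map_add, map_add] at h
      simp only [LinearMap.add_apply] at h
      rw [hinv ⁅I x, I u⁆ v] at h
      linarith
    linarith [hA0, hB]
  -- the P version: η ⁅x, I u⁆ v + η ⁅x, u⁆ (I v) = 0 for x ∈ N
  have hP : ∀ x ∈ N, ∀ u v : g,
      η ⁅x, I u⁆ v + η ⁅x, u⁆ (I v) = 0 := by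
    intro x hx u v
    have h := hQ (I x) (hNI x hx) u v
    rw [hI] at h
    rw [neg_lie, neg_lie, map_neg, map_neg] at h
    simp only [LinearMap.neg_apply] at h
    linarith
  -- main argument
  intro i IH x hx y hy
  have hw1 : ⁅x, y⁆ ∈ LieModule.lowerCentralSeries ℝ g g (i + 1) := by
    rw [LieModule.lowerCentralSeries_succ]
    exact LieSubmodule.lie_mem_lie (LieSubmodule.mem_top x) hy
  have hxw : ⁅x, ⁅x, y⁆⁆ ∈ N := IH x hx _ hw1
  rw [hN, Set.mem_setOf_eq]
  have h1 : η ⁅x, y⁆ (I ⁅x, y⁆) = η ⁅x, I ⁅x, y⁆⁆ y := hBsym x hx y (I ⁅x, y⁆)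
  have h2 := hP x hx ⁅x, y⁆ y
  have h3 : η ⁅x, ⁅x, y⁆⁆ (I y) = 0 := hrad _ hxw (I y)
  linarith
end
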